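/- Let n, k ∈ ℕ with k ≥ 1, let X be a real n × k matrix such that XᵀX is invertible, let Y ∈ ℝ^n, let g > 0 and φ > 0, and let P = X(XᵀX)⁻¹Xᵀ. Then ∫_{ℝ^k} (φ/(2π))^{n/2} exp(−(φ/2)‖Y − Xβ‖₂²) · (φ/(2πg))^{k/2} (det(XᵀX))^{1/2} exp(−(φ/(2g)) βᵀXᵀXβ) dβ = (φ/(2π))^{n/2} (1+g)^{−k/2} exp(−(φ/2) Yᵀ(I_n − (g/(1+g))P)Y). -/

import Mathlib

open Matrix MeasureTheory

lemma dot_conj' {k : ℕ} (S M : Matrix (Fin k) (Fin k) ℝ) (γ : Fin k → ℝ) :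
    (S.mulVec γ) ⬝ᵥ M.mulVec (S.mulVec γ) = γ ⬝ᵥ ((Sᵀ * M * S).mulVec γ) := by
  rw [mulVec_mulVec, dotProduct_mulVec, dotProduct_mulVec]
  rw [show S *ᵥ γ = γ ᵥ* Sᵀ by rw [← transpose_transpose S, mulVec_transpose, transpose_transpose]]
  rw [vecMul_vecMul, mul_assoc]

lemma sqrt_pow_nat' (x : ℝ) (hx : 0 ≤ x) (k : ℕ) : Real.sqrt (x ^ k) = (Real.sqrt x) ^ k := by
  induction k with
  | zero => simp
  | succ m ih => rw [pow_succ, pow_succ, Real.sqrt_mul (by positivity), ih]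

lemma gauss_matrix_integral {k : ℕ} (M : Matrix (Fin k) (Fin k) ℝ) (hM : M.PosDef) :
    ∫ β : Fin k → ℝ, Real.exp (-(β ⬝ᵥ M.mulVec β)) = Real.sqrt (Real.pi ^ k / M.det) := by
  have hps := hM.posSemidef
  open scoped MatrixOrder in
  set S0 := CFC.sqrt M with hS0def
  open scoped MatrixOrder in
  have hS0symm : S0ᵀ = S0 := (CFC.sqrt_nonneg M).posSemidef.isHermitian.eq
  open scoped MatrixOrder in
  have hS0sq : S0 * S0 = M := CFC.sqrt_mul_sqrt_self M hps.nonneg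
  have hdetM : 0 < M.det := hM.det_pos
  have hdetS0sq : S0.det * S0.det = M.det := by rw [← det_mul, hS0sq]
  have hdetS0 : S0.det ≠ 0 := by
    intro h; rw [h, zero_mul] at hdetS0sq; exact hdetM.ne' hdetS0sq.symm
  set S := S0⁻¹ with hSdef
  have hdetS : S.det = S0.det⁻¹ := by rw [hSdef, det_nonsing_inv, Ring.inverse_eq_inv']
  have hdetSne : S.det ≠ 0 := by rw [hdetS]; exact inv_ne_zero hdetS0
  have hconj : Sᵀ * M * S = 1 := by
    rw [hSdef, transpose_nonsing_inv, hS0symm, ← hS0sq, ← mul_assoc,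
      nonsing_inv_mul _ (isUnit_iff_ne_zero.mpr hdetS0), one_mul,
      mul_nonsing_inv _ (isUnit_iff_ne_zero.mpr hdetS0)]
  have hmap := Measure.map_linearMap_addHaar_eq_smul_addHaar
      (volume : Measure (Fin k → ℝ)) (f := Matrix.toLin' S)
      (by rwa [LinearMap.det_toLin'])
  have hcont : Continuous (Matrix.toLin' S) := LinearMap.continuous_of_finiteDimensional _
  have hsm : StronglyMeasurable (fun β : Fin k → ℝ => Real.exp (-(β ⬝ᵥ M.mulVec β))) :=
    (Real.continuous_exp.comp ((continuous_id.dotProduct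
      (continuous_const.matrix_mulVec continuous_id)).neg)).stronglyMeasurable
  have h1 : ∫ β, Real.exp (-(β ⬝ᵥ M.mulVec β)) ∂(Measure.map (Matrix.toLin' S) volume)
      = ∫ γ : Fin k → ℝ, Real.exp (-(γ ⬝ᵥ γ)) := by
    rw [integral_map hcont.aemeasurable hsm.aestronglyMeasurable]
    congr 1 with γ
    have h2 : (Matrix.toLin' S) γ = S.mulVec γ := rfl
    rw [h2, dot_conj', hconj, one_mulVec]
  rw [hmap, integral_smul_measure, LinearMap.det_toLin',
    ENNReal.toReal_ofReal (abs_nonneg _), abs_inv, smul_eq_mul] at h1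
  have key : ∫ β : Fin k → ℝ, Real.exp (-(β ⬝ᵥ M.mulVec β))
      = |S.det| * ∫ γ : Fin k → ℝ, Real.exp (-(γ ⬝ᵥ γ)) := by
    rw [← h1, ← mul_assoc, mul_inv_cancel₀ (abs_ne_zero.mpr hdetSne), one_mul]
  rw [key]
  have hprod : ∫ γ : Fin k → ℝ, Real.exp (-(γ ⬝ᵥ γ)) = (Real.sqrt Real.pi) ^ k := by
    have h3 : ∀ γ : Fin k → ℝ, Real.exp (-(γ ⬝ᵥ γ)) = ∏ i, Real.exp (-(1:ℝ) * (γ i)^2) := by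
      intro γ
      rw [← Real.exp_sum]
      congr 1
      simp [dotProduct, ← Finset.sum_neg_distrib, pow_two]
    simp_rw [h3]
    rw [MeasureTheory.volume_pi, MeasureTheory.integral_fintype_prod_eq_pow (fun x : ℝ => Real.exp (-(1:ℝ) * x^2)),
      integral_gaussian]
    norm_num
  have habs : |S.det| = (Real.sqrt M.det)⁻¹ := by
    rw [hdetS, abs_inv]
    congr 1
    rw [← Real.sqrt_mul_self_eq_abs, hdetS0sq]
  rw [hprod, habs, Real.sqrt_div (by positivity), sqrt_pow_nat' _ Real.pi_pos.le,
    div_eq_inv_mul, mul_comm]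

/-- The β-integration step of the marginal likelihood under the g-prior: integrating
the Gaussian likelihood of `Y` against the g-prior density of `β` given the precision
`φ` yields the density of `N(0, (I_n + gP)/φ)` at `Y`, where `P = X(XᵀX)⁻¹Xᵀ` and
`(I_n + gP)⁻¹ = I_n − (g/(1+g))P`, `det(I_n + gP) = (1+g)^k`. -/
theorem gprior_beta_integral {n k : ℕ} (hk : 1 ≤ k)
    (X : Matrix (Fin n) (Fin k) ℝ) (hX : IsUnit (Xᵀ * X))
    (Y : Fin n → ℝ) (g φ : ℝ) (hg : 0 < g) (hφ : 0 < φ) :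
    (∫ β : Fin k → ℝ,
      (φ / (2 * Real.pi)) ^ ((n : ℝ) / 2) *
        Real.exp (-(φ / 2) * ∑ i, (Y i - (X.mulVec β) i) ^ 2) *
      ((φ / (2 * Real.pi * g)) ^ ((k : ℝ) / 2) * Real.sqrt (Xᵀ * X).det *
        Real.exp (-(φ / (2 * g)) * (β ⬝ᵥ (Xᵀ * X).mulVec β))))
    = (φ / (2 * Real.pi)) ^ ((n : ℝ) / 2) * (1 + g) ^ (-(k : ℝ) / 2) *
        Real.exp (-(φ / 2) *
          (Y ⬝ᵥ (1 - (g / (1 + g)) • (X * (Xᵀ * X)⁻¹ * Xᵀ)).mulVec Y)) := by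
  classical
  set A := Xᵀ * X with hAdef
  have hAd : IsUnit A.det := (isUnit_iff_isUnit_det A).mp hX
  have hAsymm : Aᵀ = A := by rw [hAdef, transpose_mul, transpose_transpose]
  have hAinv : A * A⁻¹ = 1 := mul_nonsing_inv _ hAd
  have hAherm : A.IsHermitian := by
    rw [Matrix.IsHermitian, conjTranspose_eq_transpose_of_trivial, hAsymm]
  have hApsd : A.PosSemidef := by
    have := posSemidef_conjTranspose_mul_self X
    rwa [conjTranspose_eq_transpose_of_trivial] at this
  have hApd : A.PosDef := by
    refine posDef_iff_dotProduct_mulVec.mpr ⟨hAherm, fun x hx => lt_of_le_of_ne ?_ ?_⟩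
    · simpa using hApsd.dotProduct_mulVec_nonneg x
    · intro h
      have h0 : A.mulVec x = 0 := (hApsd.dotProduct_mulVec_zero_iff x).mp (by simpa using h.symm)
      apply hx
      have := congrArg (A⁻¹.mulVec) h0
      rwa [mulVec_mulVec, nonsing_inv_mul _ hAd, one_mulVec, mulVec_zero] at this
  set s : ℝ := g / (1 + g) with hsdef
  set t : ℝ := φ * (1 + g) / (2 * g) with htdef
  set μ : Fin k → ℝ := s • ((A⁻¹ * Xᵀ).mulVec Y) with hμdef
  set P := X * A⁻¹ * Xᵀ with hPdef
  have hAμ : A.mulVec μ = s • (Xᵀ.mulVec Y) := by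
    rw [hμdef, mulVec_smul, mulVec_mulVec, ← Matrix.mul_assoc, hAinv, Matrix.one_mul]
  have hb2 : ∀ β : Fin k → ℝ, μ ⬝ᵥ A.mulVec β = s * (β ⬝ᵥ Xᵀ.mulVec Y) := by
    intro β
    rw [dotProduct_mulVec, ← mulVec_transpose, hAsymm, hAμ, smul_dotProduct,
      smul_eq_mul, dotProduct_comm]
  have hb1 : ∀ β : Fin k → ℝ, β ⬝ᵥ A.mulVec μ = s * (β ⬝ᵥ Xᵀ.mulVec Y) := by
    intro β
    rw [hAμ, dotProduct_smul, smul_eq_mul]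
  have hd : μ ⬝ᵥ A.mulVec μ = s * s * (Y ⬝ᵥ P.mulVec Y) := by
    rw [hAμ, dotProduct_smul, hμdef, smul_dotProduct, smul_eq_mul, smul_eq_mul, ← mul_assoc]
    congr 1
    rw [dotProduct_mulVec, ← mulVec_transpose, transpose_transpose, mulVec_mulVec,
      dotProduct_comm, dotProduct_mulVec]
    rw [hPdef, dotProduct_mulVec, ← Matrix.mul_assoc]
  have hXb : ∀ β : Fin k → ℝ, (X.mulVec β) ⬝ᵥ (X.mulVec β) = β ⬝ᵥ A.mulVec β := by
    intro β
    rw [hAdef, ← mulVec_mulVec, dotProduct_mulVec (v := β), ← mulVec_transpose,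
      transpose_transpose, dotProduct_comm]
  have hYXb : ∀ β : Fin k → ℝ, Y ⬝ᵥ (X.mulVec β) = β ⬝ᵥ Xᵀ.mulVec Y := by
    intro β
    rw [dotProduct_mulVec, ← mulVec_transpose, dotProduct_comm]
  have hF1 : ∀ β : Fin k → ℝ, ∑ i, (Y i - (X.mulVec β) i) ^ 2
      = Y ⬝ᵥ Y - 2 * (β ⬝ᵥ Xᵀ.mulVec Y) + β ⬝ᵥ A.mulVec β := by
    intro β
    rw [← hXb β, ← hYXb β]
    simp only [dotProduct, Finset.mul_sum]
    rw [← Finset.sum_sub_distrib, ← Finset.sum_add_distrib]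
    congr 1 with i
    ring
  have hF3 : Y ⬝ᵥ ((1 : Matrix (Fin n) (Fin n) ℝ) - s • P).mulVec Y
      = Y ⬝ᵥ Y - s * (Y ⬝ᵥ P.mulVec Y) := by
    rw [sub_mulVec, dotProduct_sub, one_mulVec, smul_mulVec, dotProduct_smul, smul_eq_mul]
  have hF2 : ∀ β : Fin k → ℝ, (β - μ) ⬝ᵥ (t • A).mulVec (β - μ)
      = t * (β ⬝ᵥ A.mulVec β) - 2 * t * s * (β ⬝ᵥ Xᵀ.mulVec Y)
        + t * (s * s) * (Y ⬝ᵥ P.mulVec Y) := by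
    intro β
    rw [smul_mulVec, dotProduct_smul, smul_eq_mul, mulVec_sub, dotProduct_sub,
      sub_dotProduct, sub_dotProduct, hb1 β, hb2 β, hd]
    ring
  have hs1g : (0:ℝ) < 1 + g := by linarith
  have hspos : 0 < s := by rw [hsdef]; positivity
  have htpos : 0 < t := by rw [htdef]; positivity
  have hexp : ∀ β : Fin k → ℝ,
      -(φ / 2) * ∑ i, (Y i - (X.mulVec β) i) ^ 2 + -(φ / (2 * g)) * (β ⬝ᵥ A.mulVec β)
      = -((β - μ) ⬝ᵥ (t • A).mulVec (β - μ))
        + -(φ / 2) * (Y ⬝ᵥ ((1 : Matrix (Fin n) (Fin n) ℝ) - s • P).mulVec Y) := by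
    intro β
    rw [hF1 β, hF2 β, hF3]
    have h1g : (1:ℝ) + g ≠ 0 := hs1g.ne'
    rw [hsdef, htdef]
    field_simp
    ring
  have hMpd : (t • A).PosDef := by
    refine posDef_iff_dotProduct_mulVec.mpr ⟨?_, ?_⟩
    · show (t • A)ᴴ = t • A
      rw [conjTranspose_smul, conjTranspose_eq_transpose_of_trivial, hAsymm]
      simp
    · intro x hx
      have hApd' := hApd.dotProduct_mulVec_pos hx
      rw [smul_mulVec, dotProduct_smul, smul_eq_mul]
      simp only [star_trivial] at hApd' ⊢
      exact mul_pos htpos hApd'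
  -- rewrite the integrand
  set cn : ℝ := (φ / (2 * Real.pi)) ^ ((n : ℝ) / 2) with hcndef
  set ck : ℝ := (φ / (2 * Real.pi * g)) ^ ((k : ℝ) / 2) with hckdef
  set C : ℝ := -(φ / 2) * (Y ⬝ᵥ ((1 : Matrix (Fin n) (Fin n) ℝ) - s • P).mulVec Y) with hCdef
  have hpt : ∀ β : Fin k → ℝ,
      cn * Real.exp (-(φ / 2) * ∑ i, (Y i - (X.mulVec β) i) ^ 2) *
        (ck * Real.sqrt A.det * Real.exp (-(φ / (2 * g)) * (β ⬝ᵥ A.mulVec β)))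
      = (cn * (ck * Real.sqrt A.det) * Real.exp C) *
          Real.exp (-((β - μ) ⬝ᵥ (t • A).mulVec (β - μ))) := by
    intro β
    rw [mul_mul_mul_comm, ← Real.exp_add, hexp β, Real.exp_add, hCdef]
    ring
  rw [integral_congr_ae (Filter.Eventually.of_forall hpt)]
  rw [MeasureTheory.integral_const_mul]
  rw [show (∫ β : Fin k → ℝ, Real.exp (-((β - μ) ⬝ᵥ (t • A).mulVec (β - μ))))
      = ∫ γ : Fin k → ℝ, Real.exp (-(γ ⬝ᵥ (t • A).mulVec γ)) from
    integral_sub_right_eq_self (fun γ => Real.exp (-(γ ⬝ᵥ (t • A).mulVec γ))) μ]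
  rw [gauss_matrix_integral _ hMpd]
  -- final arithmetic
  have hdetA : 0 < A.det := hApd.det_pos
  have hdet : (t • A).det = t ^ k * A.det := by
    rw [det_smul, Fintype.card_fin]
  rw [hdet]
  have harith : ck * Real.sqrt A.det * Real.sqrt (Real.pi ^ k / (t ^ k * A.det))
      = (1 + g) ^ (-(k : ℝ) / 2) := by
    have h1 : Real.pi ^ k / (t ^ k * A.det) = (Real.pi / t) ^ k / A.det := by
      rw [← div_div, ← div_pow]
    rw [h1, Real.sqrt_div (by positivity), sqrt_pow_nat' _ (by positivity)]
    have hsd : Real.sqrt A.det ≠ 0 := (Real.sqrt_pos.mpr hdetA).ne'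
    rw [show ck * Real.sqrt A.det * ((Real.sqrt (Real.pi / t)) ^ k / Real.sqrt A.det)
        = ck * (Real.sqrt (Real.pi / t)) ^ k by field_simp]
    have h2 : (Real.sqrt (Real.pi / t)) ^ k = (Real.pi / t) ^ ((k : ℝ) / 2) := by
      rw [Real.sqrt_eq_rpow, ← Real.rpow_natCast ((Real.pi / t) ^ ((1:ℝ)/2)) k,
        ← Real.rpow_mul (by positivity)]
      congr 1
      ring
    rw [h2, hckdef, ← Real.mul_rpow (by positivity) (by positivity)]
    have h3 : φ / (2 * Real.pi * g) * (Real.pi / t) = (1 + g)⁻¹ := by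
      rw [htdef]
      field_simp
    rw [h3, Real.inv_rpow hs1g.le, ← Real.rpow_neg hs1g.le, neg_div]
  rw [show cn * (ck * Real.sqrt A.det) * Real.exp C * Real.sqrt (Real.pi ^ k / (t ^ k * A.det))
      = cn * (ck * Real.sqrt A.det * Real.sqrt (Real.pi ^ k / (t ^ k * A.det))) * Real.exp C
      by ring, harith]
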